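/- Let W_1,…,W_K be subspaces of 𝔽^d with weights w_1,…,w_K > 0 and fusion frame operator S = Σ_{k=1}^K w_k² π_{W_k}, and suppose (W, w) ∈ ℰ. Let λ be an eigenvalue of S with eigenspace E = ker(S − λ·I). Then the family {(W_k, w_k) : W_k ⊆ E} is a λ-tight fusion frame for E; that is, W_k ⊆ E for every k in the index set I = {k : S π_{W_k} = λ π_{W_k}}, and Σ_{k ∈ I} w_k² π_{W_k} f = λ f for every f ∈ E. -/

import Mathlib

open scoped BigOperators Classical

/-- The orthogonal projection onto a subspace `W` of `𝔽^d`, as an endomorphism. -/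
noncomputable def projL {𝕜 : Type*} [RCLike 𝕜] {d : ℕ}
    (W : Submodule 𝕜 (EuclideanSpace 𝕜 (Fin d))) :
    EuclideanSpace 𝕜 (Fin d) →ₗ[𝕜] EuclideanSpace 𝕜 (Fin d) :=
  W.subtype ∘ₗ (W.orthogonalProjection).toLinearMap

/-- The fusion frame operator `S = Σ w_k² π_{W_k}`. -/
noncomputable def fusionOp {𝕜 : Type*} [RCLike 𝕜] {d K : ℕ}
    (w : Fin K → ℝ) (W : Fin K → Submodule 𝕜 (EuclideanSpace 𝕜 (Fin d))) :
    EuclideanSpace 𝕜 (Fin d) →ₗ[𝕜] EuclideanSpace 𝕜 (Fin d) :=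
  ∑ k, ((w k : 𝕜) ^ 2) • projL (W k)

/-- `(W, w) ∈ ℰ`: every projection `π_{W_k}` is an eigenoperator of `S`. -/
def MemE {𝕜 : Type*} [RCLike 𝕜] {d K : ℕ}
    (w : Fin K → ℝ) (W : Fin K → Submodule 𝕜 (EuclideanSpace 𝕜 (Fin d))) : Prop :=
  ∀ k, ∃ μ : ℝ, Module.End.HasEigenvalue (fusionOp w W) (μ : 𝕜) ∧
    fusionOp w W ∘ₗ projL (W k) = (μ : 𝕜) • projL (W k)

/-- if `(W, w) ∈ ℰ` and `λ` is an eigenvalue of `S` with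
eigenspace `E`, then `{(W_k, w_k) : k ∈ I}`, where
`I = {k : S π_{W_k} = λ π_{W_k}}`, is a `λ`-tight fusion frame for `E`:
`W_k ⊆ E` for every `k ∈ I` and `Σ_{k ∈ I} w_k² π_{W_k} f = λ f` for `f ∈ E`. -/
lemma projL_mem_fix {𝕜 : Type*} [RCLike 𝕜] {d : ℕ}
    (V : Submodule 𝕜 (EuclideanSpace 𝕜 (Fin d))) {x : EuclideanSpace 𝕜 (Fin d)}
    (hx : x ∈ V) : projL V x = x := by
  simp only [projL, LinearMap.comp_apply, ContinuousLinearMap.coe_coe]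
  have := Submodule.orthogonalProjection_mem_subspace_eq_self (K := V) ⟨x, hx⟩
  simp [this]

lemma fusionOp_symm {𝕜 : Type*} [RCLike 𝕜] {d K : ℕ}
    (w : Fin K → ℝ) (W : Fin K → Submodule 𝕜 (EuclideanSpace 𝕜 (Fin d))) :
    (fusionOp w W).IsSymmetric := by
  intro x y
  simp only [fusionOp, LinearMap.sum_apply, LinearMap.smul_apply, sum_inner, inner_sum]
  refine Finset.sum_congr rfl fun k _ => ?_
  rw [inner_smul_left, inner_smul_right]
  congr 1
  · rw [← RCLike.ofReal_pow, RCLike.conj_ofReal, RCLike.ofReal_pow]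
  · exact Submodule.inner_starProjection_left_eq_right (W k) x y

theorem stmt3 {𝕜 : Type*} [RCLike 𝕜] {d K : ℕ} (hd : 0 < d)
    (w : Fin K → ℝ) (hw : ∀ k, 0 < w k)
    (W : Fin K → Submodule 𝕜 (EuclideanSpace 𝕜 (Fin d)))
    (hmemE : MemE w W)
    (lam : ℝ) (hlam : Module.End.HasEigenvalue (fusionOp w W) (lam : 𝕜))
    (E : Submodule 𝕜 (EuclideanSpace 𝕜 (Fin d)))
    (hE : E = LinearMap.ker (fusionOp w W - (lam : 𝕜) • LinearMap.id))
    (I : Finset (Fin K))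
    (hI : I = Finset.univ.filter
      (fun k => fusionOp w W ∘ₗ projL (W k) = (lam : 𝕜) • projL (W k))) :
    (∀ k ∈ I, W k ≤ E) ∧
      ∀ f ∈ E, ∑ k ∈ I, ((w k : 𝕜) ^ 2) • projL (W k) f = (lam : 𝕜) • f := by
  subst hE hI
  constructor
  · intro k hk x hx
    simp only [Finset.mem_filter, Finset.mem_univ, true_and] at hk
    have h1 : fusionOp w W x = (lam : 𝕜) • x := by
      have := congrArg (fun T => T x) hk
      simpa [LinearMap.comp_apply, projL_mem_fix (W k) hx] using this
    simp [LinearMap.mem_ker, LinearMap.sub_apply, h1]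
  · intro f hf
    have hSf : fusionOp w W f = (lam : 𝕜) • f := by
      have := hf
      simp only [LinearMap.mem_ker, LinearMap.sub_apply, LinearMap.smul_apply,
        LinearMap.id_apply, sub_eq_zero] at this
      exact this
    have hzero : ∀ k ∈ (Finset.univ : Finset (Fin K)),
        k ∉ Finset.univ.filter
          (fun k => fusionOp w W ∘ₗ projL (W k) = (lam : 𝕜) • projL (W k)) →
        ((w k : 𝕜) ^ 2) • projL (W k) f = 0 := by
      intro k _ hk
      simp only [Finset.mem_filter, Finset.mem_univ, true_and] at hk
      obtain ⟨μ, _, hμ⟩ := hmemE k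
      have hne : (μ : 𝕜) ≠ (lam : 𝕜) := by
        intro h
        exact hk (by rw [hμ, h])
      -- f is orthogonal to W k
      have horth : f ∈ (W k)ᗮ := by
        rw [Submodule.mem_orthogonal]
        intro x hx
        have hSx : fusionOp w W x = (μ : 𝕜) • x := by
          have := congrArg (fun T => T x) hμ
          simpa [LinearMap.comp_apply, projL_mem_fix (W k) hx] using this
        have h1 : (inner 𝕜 (fusionOp w W x) f : 𝕜) = inner 𝕜 x (fusionOp w W f) :=
          fusionOp_symm w W x f
        rw [hSx, hSf, inner_smul_left, inner_smul_right, RCLike.conj_ofReal] at h1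
        have : ((μ : 𝕜) - (lam : 𝕜)) * inner 𝕜 x f = 0 := by ring_nf; linear_combination h1
        rcases mul_eq_zero.mp this with h | h
        · exact absurd (sub_eq_zero.mp h) hne
        · exact h
      have : projL (W k) f = 0 := by
        simp only [projL, LinearMap.comp_apply, ContinuousLinearMap.coe_coe]
        rw [Submodule.orthogonalProjectionOnto_apply_of_mem_orthogonal horth]
        simp
      rw [this, smul_zero]
    rw [Finset.sum_subset (Finset.subset_univ _) hzero]
    have : fusionOp w W f = ∑ k, ((w k : 𝕜) ^ 2) • projL (W k) f := by
      simp [fusionOp, LinearMap.sum_apply]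
    rw [← this, hSf]
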